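/- For every pair of integers n, j with n ≥ 1 and 1 ≤ j ≤ n−1, one has a(n,j)·n^{−n} ≤ √j·ν(j/n)^n. -/

import Mathlib

open Finset Real
set_option maxHeartbeats 1000000

noncomputable def stirling2 (n j : ℕ) : ℝ :=
  (1 / (Nat.factorial j : ℝ)) *
    ∑ i ∈ Finset.range (j + 1), (-1 : ℝ) ^ i * (Nat.choose j i : ℝ) * ((j - i : ℕ) : ℝ) ^ n

noncomputable def a (n j : ℕ) : ℝ :=
  (Nat.choose n j : ℝ) * (Nat.factorial j : ℝ) * stirling2 n j

noncomputable def varphi (x : ℝ) : ℝ := x ^ (-x) * (1 - x) ^ (-(1 - x))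

noncomputable def nu (x : ℝ) : ℝ := x * Real.exp (-x) * varphi x ^ 2


noncomputable def T (n j : ℕ) : ℝ :=
  ∑ i ∈ Finset.range (j + 1), (-1 : ℝ) ^ i * (Nat.choose j i : ℝ) * ((j - i : ℕ) : ℝ) ^ n

lemma T_zero_right (n : ℕ) : T (n+1) 0 = 0 := by
  simp [T]

lemma T_zero_left (j : ℕ) : T 0 j = if j = 0 then 1 else 0 := by
  have h := @Int.alternating_sum_range_choose j
  have : ((∑ i ∈ Finset.range (j + 1), (-1 : ℤ) ^ i * (Nat.choose j i : ℤ) : ℤ) : ℝ)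
      = ∑ i ∈ Finset.range (j + 1), (-1 : ℝ) ^ i * (Nat.choose j i : ℝ) := by
    push_cast; ring
  simp only [T, pow_zero, mul_one]
  rw [← this, h]
  split <;> simp

lemma T_rec (n j : ℕ) : T (n+1) (j+1) = (j+1 : ℝ) * (T n (j+1) + T n j) := by
  have key : ∀ i ∈ Finset.range (j+2),
      (-1 : ℝ) ^ i * (Nat.choose (j+1) i : ℝ) * ((j+1 - i : ℕ) : ℝ) ^ (n+1)
      = (j+1 : ℝ) * ((-1 : ℝ) ^ i * (Nat.choose (j+1) i : ℝ) * ((j+1 - i : ℕ) : ℝ) ^ n)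
        - (i : ℝ) * ((-1 : ℝ) ^ i * (Nat.choose (j+1) i : ℝ) * ((j+1 - i : ℕ) : ℝ) ^ n) := by
    intro i hi
    have hi' : i ≤ j + 1 := by simpa [Nat.lt_succ_iff] using Finset.mem_range.mp hi
    have hc : ((j+1 - i : ℕ) : ℝ) = (j+1 : ℝ) - i := by
      push_cast [Nat.cast_sub hi']; ring
    rw [pow_succ]
    rw [hc]; ring
  rw [show T (n+1) (j+1) = ∑ i ∈ Finset.range (j+2),
      (-1 : ℝ) ^ i * (Nat.choose (j+1) i : ℝ) * ((j+1 - i : ℕ) : ℝ) ^ (n+1) from rfl]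
  rw [Finset.sum_congr rfl key, Finset.sum_sub_distrib, ← Finset.mul_sum]
  have h1 : ∑ i ∈ Finset.range (j+2),
      (-1 : ℝ) ^ i * (Nat.choose (j+1) i : ℝ) * ((j+1 - i : ℕ) : ℝ) ^ n = T n (j+1) := rfl
  have h2 : ∑ i ∈ Finset.range (j+2),
      (i : ℝ) * ((-1 : ℝ) ^ i * (Nat.choose (j+1) i : ℝ) * ((j+1 - i : ℕ) : ℝ) ^ n)
      = -((j+1 : ℝ) * T n j) := by
    rw [Finset.sum_range_succ' (fun i => (i : ℝ) * ((-1 : ℝ) ^ i * (Nat.choose (j+1) i : ℝ) * ((j+1 - i : ℕ) : ℝ) ^ n)) (j+1)]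
    simp only [Nat.cast_zero, zero_mul, add_zero]
    rw [T, Finset.mul_sum, ← Finset.sum_neg_distrib]
    apply Finset.sum_congr rfl
    intro i hi
    have hnat : (i+1) * Nat.choose (j+1) (i+1) = (j+1) * Nat.choose j i := by
      rw [mul_comm]; exact (Nat.add_one_mul_choose_eq j i).symm
    have hch : ((i+1 : ℕ) : ℝ) * ((Nat.choose (j+1) (i+1) : ℕ) : ℝ)
        = ((j : ℝ)+1) * (Nat.choose j i : ℝ) := by exact_mod_cast hnat
    have hsub : (j + 1 - (i+1) : ℕ) = (j - i : ℕ) := by omega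
    rw [hsub, pow_succ]
    push_cast at hch ⊢
    linear_combination (-(-1 : ℝ)^i * ((j - i : ℕ) : ℝ)^n) * hch
  rw [h1, h2]
  ring

lemma T_bound (n : ℕ) : ∀ k : ℕ, 0 ≤ T (n+1) (k+1) ∧
    T (n+1) (k+1) ≤ ((k+1).factorial : ℝ) * (Nat.choose n k : ℝ) * ((k : ℝ) + 1) ^ (n - k) := by
  induction n with
  | zero =>
    intro k
    rw [T_rec]
    cases k with
    | zero => norm_num [T_zero_left]
    | succ m =>
      simp only [T_zero_left]
      norm_num
  | succ n ih =>
    intro k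
    rw [T_rec]
    have hk0 : 0 ≤ T (n+1) k := by
      cases k with
      | zero => rw [T_zero_right]
      | succ m => exact (ih m).1
    have hk1 := (ih k).1
    constructor
    · positivity
    · cases k with
      | zero =>
        have hb := (ih 0).2
        simp only [T_zero_right] at *
        simp only [Nat.choose_zero_right, Nat.cast_one, Nat.cast_zero, Nat.factorial_one, one_mul,
          zero_add, one_pow, mul_one] at hb ⊢
        linarith
      | succ m =>
        have A := (ih (m+1)).2
        have B := (ih m).2
        have hA : ((m+2 : ℕ) : ℝ) * (((m+2).factorial : ℝ) * (Nat.choose n (m+1) : ℝ) * ((m : ℝ) + 1 + 1) ^ (n - (m+1)))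
            ≤ ((m+2).factorial : ℝ) * (Nat.choose n (m+1) : ℝ) * ((m : ℝ) + 1 + 1) ^ (n - m) := by
          rcases le_or_gt (m+1) n with h | h
          · have : n - m = (n - (m+1)) + 1 := by omega
            rw [this, pow_succ]
            exact le_of_eq (by push_cast; ring)
          · rw [Nat.choose_eq_zero_of_lt h]
            norm_num
        have hB : ((m+2 : ℕ) : ℝ) * (((m+1).factorial : ℝ) * (Nat.choose n m : ℝ) * ((m : ℝ) + 1) ^ (n - m))
            ≤ ((m+2).factorial : ℝ) * (Nat.choose n m : ℝ) * ((m : ℝ) + 1 + 1) ^ (n - m) := by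
          have hf : ((m+2).factorial : ℝ) = ((m+2 : ℕ) : ℝ) * ((m+1).factorial : ℝ) := by
            rw [show m+2 = (m+1)+1 from rfl, Nat.factorial_succ]
            push_cast; ring
          rw [hf]
          have hp : ((m : ℝ) + 1) ^ (n - m) ≤ ((m : ℝ) + 1 + 1) ^ (n - m) := by
            apply pow_le_pow_left₀ (by positivity) (by linarith)
          have hkey := mul_le_mul_of_nonneg_left hp
            (by positivity : (0:ℝ) ≤ ((m:ℝ)+2) * (((m+1).factorial : ℝ) * (Nat.choose n m : ℝ)))
          push_cast at hkey ⊢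
          nlinarith [hkey]
        have hPascal : (Nat.choose (n+1) (m+1) : ℝ) = (Nat.choose n m : ℝ) + (Nat.choose n (m+1) : ℝ) := by
          rw [Nat.choose_succ_succ]
          push_cast; ring
        have hsub : (n+1) - (m+1) = n - m := by omega
        rw [hsub, hPascal]
        have h2 : (0:ℝ) ≤ (m:ℝ)+2 := by positivity
        have cA := mul_le_mul_of_nonneg_left A h2
        have cB := mul_le_mul_of_nonneg_left B h2
        push_cast at cA cB hA hB ⊢
        nlinarith [cA, cB, hA, hB]

open Real in
lemma stirlingSeq_ge_sqrt_pi (m : ℕ) : Real.sqrt π ≤ Stirling.stirlingSeq (m+1) := by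
  have htend : Filter.Tendsto (Stirling.stirlingSeq ∘ Nat.succ) Filter.atTop (nhds (Real.sqrt π)) :=
    Stirling.tendsto_stirlingSeq_sqrt_pi.comp (Filter.tendsto_add_atTop_nat 1)
  exact Stirling.stirlingSeq'_antitone.le_of_tendsto htend m

open Real in
lemma stirlingSeq_le_one (m : ℕ) : Stirling.stirlingSeq (m+1) ≤ Real.exp 1 / Real.sqrt 2 := by
  have := Stirling.stirlingSeq'_antitone (Nat.zero_le m)
  simpa [Stirling.stirlingSeq_one] using this

open Real in
lemma factorial_lower (m : ℕ) (hm : 1 ≤ m) :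
    Real.sqrt π * (Real.sqrt (2*m) * ((m:ℝ)/Real.exp 1)^m) ≤ (m.factorial : ℝ) := by
  obtain ⟨k, rfl⟩ := Nat.exists_eq_add_of_le hm
  have h := stirlingSeq_ge_sqrt_pi k
  have hd : 0 < Real.sqrt (2*(1+k:ℕ)) * (((1+k:ℕ):ℝ)/Real.exp 1)^(1+k) := by
    have : (0:ℝ) < ((1+k:ℕ):ℝ) := by positivity
    positivity
  rw [show k+1 = 1+k by omega, Stirling.stirlingSeq, le_div_iff₀ hd] at h
  calc Real.sqrt π * (Real.sqrt (2*(1+k:ℕ)) * (((1+k:ℕ):ℝ)/Real.exp 1)^(1+k))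
      = Real.sqrt π * (Real.sqrt (2*(1+k:ℕ)) * (((1+k:ℕ):ℝ)/Real.exp 1)^(1+k)) := rfl
    _ ≤ _ := by
        rw [mul_comm (Real.sqrt π)] at h ⊢
        push_cast at h ⊢
        convert h using 2 <;> norm_num

open Real in
lemma factorial_upper (m : ℕ) (hm : 1 ≤ m) :
    (m.factorial : ℝ) ≤ Real.exp 1 * Real.sqrt m * ((m:ℝ)/Real.exp 1)^m := by
  obtain ⟨k, rfl⟩ := Nat.exists_eq_add_of_le hm
  have h := stirlingSeq_le_one k
  have hd : 0 < Real.sqrt (2*(1+k:ℕ)) * (((1+k:ℕ):ℝ)/Real.exp 1)^(1+k) := by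
    have : (0:ℝ) < ((1+k:ℕ):ℝ) := by positivity
    positivity
  rw [show k+1 = 1+k by omega, Stirling.stirlingSeq, div_le_iff₀ hd] at h
  refine le_trans h (le_of_eq ?_)
  have h2 : Real.sqrt (2*((1+k:ℕ):ℝ)) = Real.sqrt 2 * Real.sqrt ((1+k:ℕ):ℝ) := Real.sqrt_mul (by norm_num) _
  have hs2 : Real.sqrt 2 ≠ 0 := by positivity
  push_cast at h2 ⊢
  rw [h2]
  field_simp


-- numeric lemma
lemma numeric3 : 3 ≤ (3/2) * Real.log Real.pi + (5/2) * Real.log 2 := by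
  have h32 : Real.log (Real.pi ^ (3:ℕ) * 2 ^ (5:ℕ)) = 3 * Real.log Real.pi + 5 * Real.log 2 := by
    rw [Real.log_mul (by positivity) (by positivity), Real.log_pow, Real.log_pow]
    push_cast; ring
  have hle : Real.exp 6 ≤ Real.pi ^ (3:ℕ) * 2 ^ (5:ℕ) := by
    have he : Real.exp 6 = (Real.exp 1) ^ (6:ℕ) := by
      rw [← Real.exp_nat_mul]; norm_num
    have h1 : (Real.exp 1) ^ (6:ℕ) ≤ (2.7182818286 : ℝ) ^ (6:ℕ) := by
      apply pow_le_pow_left₀ (le_of_lt (Real.exp_pos 1)) (le_of_lt Real.exp_one_lt_d9)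
    have h2 : ((3.14 : ℝ)) ^ (3:ℕ) * 2 ^ (5:ℕ) ≤ Real.pi ^ (3:ℕ) * 2 ^ (5:ℕ) := by
      have := Real.pi_gt_d2
      gcongr <;> norm_num [this.le]
    nlinarith [h1, h2, he]
  have h6 : (6:ℝ) ≤ Real.log (Real.pi ^ (3:ℕ) * 2 ^ (5:ℕ)) := by
    rw [Real.le_log_iff_exp_le (by positivity)]
    exact hle
  rw [h32] at h6
  linarith

lemma key_lin (J D LJ LD LN LN1 Lnf Ln1f Ldf Ljf : ℝ)
    (hLD : 0 ≤ LD)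
    (hyx : LN1 ≤ LN)
    (hc : Real.log 2 ≤ (J + D - 1)*LN - (J + D - 1)*LN1)
    (h_nf : Lnf ≤ 1 + (1/2)*LN + (J+D)*(LN - 1))
    (h_n1f : Ln1f ≤ 1 + (1/2)*LN1 + (J+D-1)*(LN1 - 1))
    (h_df : (1/2)*(Real.log 2 + Real.log Real.pi) + (1/2)*LD + D*(LD - 1) ≤ Ldf)
    (h_jf : (1/2)*(Real.log 2 + Real.log Real.pi) + (1/2)*LJ + J*(LJ - 1) - LJ ≤ Ljf) :
    Lnf + Ln1f - Ljf - 2*Ldf + D*LJ - (J+D)*LN ≤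
      (1/2)*LJ + ((J+D)*(LJ-LN) - J - 2*J*(LJ-LN) - 2*D*(LD-LN)) := by
  have h3 := numeric3
  nlinarith [h_nf, h_n1f, h_df, h_jf, hc, hyx, hLD, h3]

-- log-form factorial bounds
lemma log_factorial_upper (m : ℕ) (hm : 1 ≤ m) :
    Real.log (m.factorial : ℝ) ≤ 1 + (1/2)*Real.log m + (m:ℝ)*(Real.log m - 1) := by
  have hm0 : (0:ℝ) < (m:ℝ) := by exact_mod_cast hm
  have h := factorial_upper m hm
  have hlog := Real.log_le_log (by positivity) h
  rw [Real.log_mul (by positivity) (by positivity), Real.log_mul (by positivity) (by positivity),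
    Real.log_pow, Real.log_div (by positivity) (by positivity), Real.log_exp, Real.log_sqrt hm0.le] at hlog
  linarith

lemma log_factorial_lower (m : ℕ) (hm : 1 ≤ m) :
    (1/2)*(Real.log 2 + Real.log Real.pi) + (1/2)*Real.log m + (m:ℝ)*(Real.log m - 1)
      ≤ Real.log (m.factorial : ℝ) := by
  have hm0 : (0:ℝ) < (m:ℝ) := by exact_mod_cast hm
  have h := factorial_lower m hm
  have hfpos : (0:ℝ) < (m.factorial : ℝ) := by exact_mod_cast m.factorial_pos
  have hlog := Real.log_le_log (by positivity) h
  rw [Real.log_mul (by positivity) (by positivity), Real.log_mul (by positivity) (by positivity),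
    Real.log_pow, Real.log_div (by positivity) (by positivity), Real.log_exp,
    Real.log_sqrt (by positivity : (0:ℝ) ≤ 2*(m:ℝ)), Real.log_sqrt Real.pi_pos.le,
    Real.log_mul (by norm_num) hm0.ne'] at hlog
  linarith

theorem stmt_16 (n j : ℕ) (hn : 1 ≤ n) (hj1 : 1 ≤ j) (hj2 : j ≤ n - 1) :
    a n j * (n : ℝ) ^ (-(n : ℝ)) ≤ Real.sqrt j * nu ((j : ℝ) / n) ^ n := by
  have hn2 : 2 ≤ n := by omega
  set d : ℕ := n - j with hddef
  have hd1 : 1 ≤ d := by omega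
  have hjd : j + d = n := by omega
  have hjn : j < n := by omega
  -- real abbreviations
  have hJ1 : (1:ℝ) ≤ (j:ℝ) := by exact_mod_cast hj1
  have hD1 : (1:ℝ) ≤ (d:ℝ) := by exact_mod_cast hd1
  have hN0 : (0:ℝ) < (n:ℝ) := by positivity
  have hJ0 : (0:ℝ) < (j:ℝ) := by linarith
  have hD0 : (0:ℝ) < (d:ℝ) := by linarith
  have hNJD : (n:ℝ) = (j:ℝ) + (d:ℝ) := by exact_mod_cast hjd.symm
  set t : ℝ := (j:ℝ) / n with htdef
  have ht0 : 0 < t := by positivity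
  have ht1 : t < 1 := by
    rw [htdef, div_lt_one hN0]; exact_mod_cast hjn
  have h1t : 1 - t = (d:ℝ) / n := by
    rw [htdef]; field_simp; linarith [hNJD]
  have h1t0 : 0 < 1 - t := by linarith
  -- a = choose * T
  have ha : a n j = (Nat.choose n j : ℝ) * T n j := by
    unfold a stirling2 T
    have hf : (Nat.factorial j : ℝ) ≠ 0 := by positivity
    field_simp
  -- T bound
  have hTB : T n j ≤ (j.factorial : ℝ) * (Nat.choose (n-1) (j-1) : ℝ) * (j:ℝ) ^ d ∧ 0 ≤ T n j := by
    obtain ⟨n', rfl⟩ : ∃ n', n = n' + 1 := ⟨n-1, by omega⟩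
    obtain ⟨j', rfl⟩ : ∃ j', j = j' + 1 := ⟨j-1, by omega⟩
    have h := T_bound n' j'
    constructor
    · have h2 := (h).2
      have e1 : (n' + 1) - 1 = n' := by omega
      have e2 : (j' + 1) - 1 = j' := by omega
      have e3 : ((j':ℝ) + 1) = ((j' + 1 : ℕ) : ℝ) := by push_cast; ring
      have e4 : n' - j' = d := by omega
      rw [e1, e2, ← e4]
      rw [e3] at h2
      exact h2
    · exact (h).1
  -- LHS ≤ P (define P as fraction)
  set P : ℝ := ((n.factorial : ℝ) * ((n-1).factorial : ℝ) * (j:ℝ)^d) /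
      (((d.factorial : ℝ))^2 * ((j-1).factorial : ℝ) * (n:ℝ)^n) with hPdef
  have hPpos : 0 < P := by
    apply div_pos <;> positivity
  have hrpow : (n : ℝ) ^ (-(n : ℝ)) = ((n:ℝ)^n)⁻¹ := by
    rw [Real.rpow_neg hN0.le, Real.rpow_natCast]
  have hstep1 : a n j * (n : ℝ) ^ (-(n : ℝ)) ≤ P := by
    rw [ha, hrpow]
    have hchoose_eq : (Nat.choose n j : ℝ) = (n.factorial : ℝ) / ((j.factorial : ℝ) * (d.factorial : ℝ)) := by
      rw [Nat.cast_choose ℝ (le_of_lt hjn)]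
    have hchoose_eq2 : (Nat.choose (n-1) (j-1) : ℝ)
        = ((n-1).factorial : ℝ) / (((j-1).factorial : ℝ) * (d.factorial : ℝ)) := by
      rw [Nat.cast_choose ℝ (by omega : j - 1 ≤ n - 1), show n-1-(j-1) = d from by omega]
    have hle : (Nat.choose n j : ℝ) * T n j ≤ (Nat.choose n j : ℝ) *
        ((j.factorial : ℝ) * (Nat.choose (n-1) (j-1) : ℝ) * (j:ℝ) ^ d) :=
      mul_le_mul_of_nonneg_left hTB.1 (Nat.cast_nonneg _)
    have heq : (Nat.choose n j : ℝ) * ((j.factorial : ℝ) * (Nat.choose (n-1) (j-1) : ℝ) * (j:ℝ) ^ d)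
        * ((n:ℝ)^n)⁻¹ = P := by
      rw [hchoose_eq, hchoose_eq2, hPdef]
      have f1 : (j.factorial : ℝ) ≠ 0 := by positivity
      have f2 : (d.factorial : ℝ) ≠ 0 := by positivity
      have f3 : ((j-1).factorial : ℝ) ≠ 0 := by positivity
      have f4 : ((n:ℝ)^n) ≠ 0 := by positivity
      field_simp
    calc (Nat.choose n j : ℝ) * T n j * ((n:ℝ)^n)⁻¹
        ≤ (Nat.choose n j : ℝ) * ((j.factorial : ℝ) * (Nat.choose (n-1) (j-1) : ℝ) * (j:ℝ) ^ d) * ((n:ℝ)^n)⁻¹ := by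
          apply mul_le_mul_of_nonneg_right hle (by positivity)
      _ = P := heq
  -- RHS positivity
  have hvarphi_pos : 0 < varphi t := by
    unfold varphi
    positivity
  have hnu_pos : 0 < nu t := by
    unfold nu
    positivity
  have hRHS_pos : 0 < Real.sqrt j * nu t ^ n := by positivity
  refine le_trans hstep1 ?_
  -- compare logs
  rw [← Real.log_le_log_iff hPpos hRHS_pos]
  -- log P
  have hcast_n1 : ((n-1 : ℕ) : ℝ) = (n:ℝ) - 1 := by
    push_cast [Nat.cast_sub (by omega : 1 ≤ n)]; ring
  have hcast_j1 : ((j-1 : ℕ) : ℝ) = (j:ℝ) - 1 := by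
    push_cast [Nat.cast_sub hj1]; ring
  have hlogP : Real.log P = Real.log (n.factorial : ℝ) + Real.log ((n-1).factorial : ℝ)
      - Real.log ((j-1).factorial : ℝ) - 2 * Real.log (d.factorial : ℝ)
      + (d:ℝ) * Real.log (j:ℝ) - (n:ℝ) * Real.log (n:ℝ) := by
    rw [hPdef, Real.log_div (by positivity) (by positivity),
      Real.log_mul (by positivity) (by positivity),
      Real.log_mul (by positivity) (by positivity),
      Real.log_mul (by positivity) (by positivity),
      Real.log_mul (by positivity) (by positivity),
      Real.log_pow, Real.log_pow, Real.log_pow]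
    push_cast
    ring
  -- log RHS
  have hlt : Real.log t = Real.log (j:ℝ) - Real.log (n:ℝ) := by
    rw [htdef, Real.log_div hJ0.ne' hN0.ne']
  have hl1t : Real.log (1-t) = Real.log (d:ℝ) - Real.log (n:ℝ) := by
    rw [h1t, Real.log_div hD0.ne' hN0.ne']
  have hlogvarphi : Real.log (varphi t) = (-t) * Real.log t + (-(1-t)) * Real.log (1-t) := by
    unfold varphi
    rw [Real.log_mul (by positivity) (by positivity), Real.log_rpow ht0, Real.log_rpow h1t0]
  have hlognu : Real.log (nu t) = Real.log t + (-t) + 2 * Real.log (varphi t) := by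
    unfold nu
    rw [Real.log_mul (by positivity) (by positivity),
      Real.log_mul (by positivity) (by positivity), Real.log_exp, Real.log_pow]
    push_cast; ring
  have hnt : (n:ℝ) * t = (j:ℝ) := by
    rw [htdef]; field_simp
  have hn1t : (n:ℝ) * (1-t) = (d:ℝ) := by
    rw [h1t]; field_simp
  have hlogRHS : Real.log (Real.sqrt j * nu t ^ n)
      = (1/2)*Real.log (j:ℝ) + (((j:ℝ)+(d:ℝ))*(Real.log (j:ℝ) - Real.log (n:ℝ)) - (j:ℝ)
        - 2*(j:ℝ)*(Real.log (j:ℝ) - Real.log (n:ℝ)) - 2*(d:ℝ)*(Real.log (d:ℝ) - Real.log (n:ℝ))) := by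
    rw [Real.log_mul (by positivity) (by positivity), Real.log_pow,
      Real.log_sqrt hJ0.le, hlognu, hlogvarphi, hlt, hl1t]
    have hnn : (n:ℝ) = (j:ℝ) + (d:ℝ) := hNJD
    linear_combination (Real.log (j:ℝ) - Real.log (n:ℝ)) * hnn
      + (-1 - 2*(Real.log (j:ℝ) - Real.log (n:ℝ))) * hnt
      + (-2*(Real.log (d:ℝ) - Real.log (n:ℝ))) * hn1t
  rw [hlogP, hlogRHS]
  -- apply key_lin
  have hLD : 0 ≤ Real.log (d:ℝ) := Real.log_nonneg hD1
  have hyx : Real.log ((n:ℝ)-1) ≤ Real.log (n:ℝ) := by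
    apply Real.log_le_log (by linarith) (by linarith)
  have hc : Real.log 2 ≤ ((j:ℝ) + (d:ℝ) - 1)*Real.log (n:ℝ) - ((j:ℝ) + (d:ℝ) - 1)*Real.log ((n:ℝ)-1) := by
    have hM1 : (1:ℝ) ≤ (n:ℝ)-1 := by
      have : (2:ℝ) ≤ (n:ℝ) := by exact_mod_cast hn2
      linarith
    have hMpos : (0:ℝ) < (n:ℝ) - 1 := by linarith
    have hcastm : ((n-1:ℕ):ℝ) = (n:ℝ)-1 := hcast_n1
    have hb : (2:ℝ) ≤ (1 + 1/((n:ℝ)-1)) ^ (n-1) := by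
      have h := one_add_mul_le_pow
        (by linarith [one_div_pos.mpr hMpos] : (-2:ℝ) ≤ 1/((n:ℝ)-1)) (n-1)
      have he : 1 + ((n-1:ℕ):ℝ) * (1/((n:ℝ)-1)) = 2 := by
        rw [hcastm]; field_simp
        norm_num
      rw [he] at h
      exact h
    have hlogb := Real.log_le_log (by norm_num) hb
    rw [Real.log_pow] at hlogb
    have hfrac : Real.log (1 + 1/((n:ℝ)-1)) = Real.log (n:ℝ) - Real.log ((n:ℝ)-1) := by
      rw [show (1 + 1/((n:ℝ)-1)) = (n:ℝ)/((n:ℝ)-1) from by field_simp; ring,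
        Real.log_div hN0.ne' (by linarith)]
    rw [hfrac] at hlogb
    have hcoef : ((j:ℝ) + (d:ℝ) - 1) = ((n-1:ℕ):ℝ) := by
      rw [hcastm, hNJD]
    rw [hcoef]
    linarith [hlogb]
  have h_nf : Real.log (n.factorial : ℝ) ≤ 1 + (1/2)*Real.log (n:ℝ) + ((j:ℝ)+(d:ℝ))*(Real.log (n:ℝ) - 1) := by
    have h := log_factorial_upper n (by omega)
    rw [show (j:ℝ)+(d:ℝ) = (n:ℝ) from hNJD.symm]
    linarith
  have h_n1f : Real.log ((n-1).factorial : ℝ) ≤ 1 + (1/2)*Real.log ((n:ℝ)-1) + ((j:ℝ)+(d:ℝ)-1)*(Real.log ((n:ℝ)-1) - 1) := by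
    have h := log_factorial_upper (n-1) (by omega)
    rw [hcast_n1] at h
    rw [show (j:ℝ)+(d:ℝ)-1 = (n:ℝ)-1 from by rw [hNJD]]
    linarith
  have h_df : (1/2)*(Real.log 2 + Real.log Real.pi) + (1/2)*Real.log (d:ℝ) + (d:ℝ)*(Real.log (d:ℝ) - 1) ≤ Real.log (d.factorial : ℝ) :=
    log_factorial_lower d hd1
  have h_jf : (1/2)*(Real.log 2 + Real.log Real.pi) + (1/2)*Real.log (j:ℝ) + (j:ℝ)*(Real.log (j:ℝ) - 1) - Real.log (j:ℝ) ≤ Real.log ((j-1).factorial : ℝ) := by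
    have hjfac : (j.factorial : ℝ) = (j:ℝ) * ((j-1).factorial : ℝ) := by
      obtain ⟨j', rfl⟩ : ∃ j', j = j' + 1 := ⟨j-1, by omega⟩
      rw [show j' + 1 - 1 = j' from rfl, Nat.factorial_succ]
      push_cast
      ring
    have hlow := log_factorial_lower j hj1
    have : Real.log (j.factorial : ℝ) = Real.log (j:ℝ) + Real.log ((j-1).factorial : ℝ) := by
      rw [hjfac, Real.log_mul hJ0.ne' (by positivity)]
    linarith
  have hkey := key_lin (j:ℝ) (d:ℝ) (Real.log (j:ℝ)) (Real.log (d:ℝ)) (Real.log (n:ℝ))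
    (Real.log ((n:ℝ)-1)) (Real.log (n.factorial : ℝ)) (Real.log ((n-1).factorial : ℝ))
    (Real.log (d.factorial : ℝ)) (Real.log ((j-1).factorial : ℝ))
    hLD hyx hc h_nf h_n1f h_df h_jf
  have hsub2 : (n:ℝ) * Real.log (n:ℝ) = ((j:ℝ)+(d:ℝ)) * Real.log (n:ℝ) := by rw [← hNJD]
  linarith [hkey, hsub2]
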